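/- arXiv:2502.06683 — 2 statements merged into one kernel-verified Lean document; each statement's English description precedes it below -/
import Mathlib

section
/- The zero matrix is a minimizer of the group-lasso problem min_W (1/(2T))‖Θ − WΘ‖_F² + λ·Σ_p ‖w_p‖₂ (where w_p is the p-th column of W and Θ is a P×T data matrix) if and only if λ ≥ max_p ‖c_p‖₂, where c_p is the p-th column of the covariance matrix C = (1/T)ΘΘᵀ. -/
open Matrix Finset in
/-- The zero matrix minimizes the group-lasso objective
`F(W) = (1/(2T))‖Θ − WΘ‖_F² + λ Σ_p ‖w_p‖₂` iff `λ ≥ max_p ‖c_p‖₂`,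
where `c_p` is the `p`-th column of `C = (1/T)ΘΘᵀ`. -/
theorem groupLasso_zero_minimizer_iff
    (P T : ℕ) (hP : 0 < P) (hT : 0 < T)
    (Θ : Matrix (Fin P) (Fin T) ℝ) (lam : ℝ) (hlam : 0 < lam)
    (C : Matrix (Fin P) (Fin P) ℝ)
    (hC : C = (1 / (T : ℝ)) • (Θ * Θᵀ))
    (f₁ : Matrix (Fin P) (Fin P) ℝ → ℝ)
    (hf₁ : f₁ = fun W => (1 / (2 * (T : ℝ))) *
      ∑ i : Fin P, ∑ t : Fin T, ((Θ - W * Θ) i t) ^ 2)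
    (g : Matrix (Fin P) (Fin P) ℝ → ℝ)
    (hg : g = fun W => ∑ p : Fin P, Real.sqrt (∑ i : Fin P, (W i p) ^ 2)) :
    (∀ W : Matrix (Fin P) (Fin P) ℝ,
        f₁ 0 + lam * g 0 ≤ f₁ W + lam * g W) ↔
      lam ≥ (univ.sup' (univ_nonempty_iff.mpr ⟨⟨0, hP⟩⟩)
        fun p : Fin P => Real.sqrt (∑ i : Fin P, (C i p) ^ 2)) := by
  have hT' : (0:ℝ) < T := by exact_mod_cast hT
  -- abbreviations
  set Q : Matrix (Fin P) (Fin P) ℝ → ℝ :=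
    fun W => ∑ i : Fin P, ∑ t : Fin T, ((W * Θ) i t) ^ 2 with hQ
  set cross : Matrix (Fin P) (Fin P) ℝ → ℝ :=
    fun W => ∑ p : Fin P, ∑ i : Fin P, W i p * C i p with hcross
  have hg0 : g 0 = 0 := by simp [hg]
  have hQnn : ∀ W, 0 ≤ Q W := by
    intro W; apply Finset.sum_nonneg; intro i _; apply Finset.sum_nonneg
    intro t _; positivity
  -- key expansion
  have expand : ∀ W, f₁ W = f₁ 0 + (1 / (2 * (T:ℝ))) * Q W - cross W := by
    intro W
    have hab : ∑ i : Fin P, ∑ t : Fin T, Θ i t * (W * Θ) i t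
        = (T:ℝ) * cross W := by
      have h1 : ∀ i : Fin P, ∑ t : Fin T, Θ i t * (W * Θ) i t
          = ∑ p : Fin P, W i p * ((Θ * Θᵀ) i p) := by
        intro i
        simp_rw [Matrix.mul_apply, Matrix.transpose_apply, Finset.mul_sum]
        rw [Finset.sum_comm]
        refine Finset.sum_congr rfl fun p _ => ?_
        exact Finset.sum_congr rfl fun t _ => by ring
      simp_rw [h1, hcross, hC, Matrix.smul_apply, smul_eq_mul]
      rw [Finset.sum_comm, Finset.mul_sum]
      refine Finset.sum_congr rfl fun i _ => ?_
      rw [Finset.mul_sum]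
      refine Finset.sum_congr rfl fun p _ => ?_
      field_simp
    have hsplit : ∀ i : Fin P, ∀ t : Fin T,
        ((Θ - W * Θ) i t) ^ 2
          = (Θ i t) ^ 2 - 2 * (Θ i t * (W * Θ) i t) + ((W * Θ) i t) ^ 2 := by
      intro i t; simp [Matrix.sub_apply]; ring
    have h0 : f₁ 0 = (1 / (2 * (T:ℝ))) * ∑ i : Fin P, ∑ t : Fin T, (Θ i t) ^ 2 := by
      simp [hf₁]
    rw [hf₁]
    simp only
    simp_rw [hsplit, Finset.sum_add_distrib, Finset.sum_sub_distrib, ← Finset.mul_sum]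
    rw [hab]
    simp only [Matrix.zero_mul, sub_zero]
    rw [hcross]
    field_simp
    ring
  constructor
  · -- minimizer → lam ≥ sup
    intro hmin
    rw [ge_iff_le, Finset.sup'_le_iff]
    intro p _
    set c : Fin P → ℝ := fun i => C i p with hc
    set n : ℝ := Real.sqrt (∑ i : Fin P, (c i) ^ 2) with hn
    have hnnn : 0 ≤ n := Real.sqrt_nonneg _
    have hn2 : n ^ 2 = ∑ i : Fin P, (c i) ^ 2 := by
      rw [hn, Real.sq_sqrt]
      exact Finset.sum_nonneg fun i _ => sq_nonneg _
    rcases eq_or_lt_of_le hnnn with h0 | hpos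
    · exact le_of_eq_of_le h0.symm hlam.le
    -- test matrices
    set W₁ : Matrix (Fin P) (Fin P) ℝ := Matrix.of (fun i q => if q = p then c i else 0) with hW₁
    set K : ℝ := Q W₁ with hK
    have key : ∀ ε : ℝ, 0 < ε → n ^ 2 - lam * n ≤ ε * (K / (2 * (T:ℝ))) := by
      intro ε hε
      have hmineq := hmin (ε • W₁)
      rw [expand (ε • W₁), hg0] at hmineq
      have hQs : Q (ε • W₁) = ε ^ 2 * K := by
        rw [hQ]; simp only [Matrix.smul_mul, Matrix.smul_apply, smul_eq_mul]
        rw [hK, hQ, Finset.mul_sum]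
        refine Finset.sum_congr rfl fun i _ => ?_
        rw [Finset.mul_sum]
        exact Finset.sum_congr rfl fun t _ => by ring
      have hcs : cross (ε • W₁) = ε * n ^ 2 := by
        rw [hcross, hn2]
        simp only [Matrix.smul_apply, smul_eq_mul]
        rw [Finset.sum_comm]
        rw [Finset.mul_sum]
        refine Finset.sum_congr rfl fun i _ => ?_
        rw [hW₁]
        simp only [Matrix.of_apply]
        rw [Finset.sum_eq_single p]
        · simp [hc]; ring
        · intro b _ hb; simp [hb]
        · intro h; exact absurd (Finset.mem_univ p) h
      have hgs : g (ε • W₁) = ε * n := by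
        rw [hg]
        simp only [Matrix.smul_apply, smul_eq_mul]
        have hterm : ∀ q : Fin P,
            Real.sqrt (∑ i : Fin P, (ε * W₁ i q) ^ 2)
              = if q = p then ε * n else 0 := by
          intro q
          by_cases hq : q = p
          · subst hq
            simp only [if_pos rfl]
            rw [hn]
            have : ∑ i : Fin P, (ε * W₁ i q) ^ 2 = ε ^ 2 * ∑ i : Fin P, (c i) ^ 2 := by
              rw [Finset.mul_sum]
              refine Finset.sum_congr rfl fun i _ => ?_
              rw [hW₁]; simp; ring
            rw [this, Real.sqrt_mul (sq_nonneg ε), Real.sqrt_sq hε.le]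
            simp
          · simp only [if_neg hq]
            have : ∑ i : Fin P, (ε * W₁ i q) ^ 2 = 0 := by
              refine Finset.sum_eq_zero fun i _ => ?_
              rw [hW₁]; simp [hq]
            rw [this, Real.sqrt_zero]
        simp_rw [hterm]
        simp
      rw [hQs, hcs, hgs] at hmineq
      -- 0 ≤ (1/(2T)) ε² K - ε n² + lam ε n
      have e1 : ε * (ε * (K / (2 * (T:ℝ)))) = 1 / (2 * (T:ℝ)) * (ε ^ 2 * K) := by
        field_simp
      have h2 : ε * (n ^ 2 - lam * n) ≤ ε * (ε * (K / (2 * (T:ℝ)))) := by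
        rw [e1]; nlinarith [hmineq]
      exact (mul_le_mul_iff_right₀ hε).mp h2
    have hfinal : n ^ 2 - lam * n ≤ 0 := by
      by_contra hcon
      push_neg at hcon
      have hKnn : 0 ≤ K / (2 * (T:ℝ)) := by
        apply div_nonneg (hQnn W₁); linarith
      set d := n ^ 2 - lam * n with hd
      have hε : 0 < d / (K / (2 * (T:ℝ)) + 1) := by positivity
      have := key _ hε
      rw [div_mul_eq_mul_div] at this
      have hlt : d * (K / (2 * (T:ℝ))) / (K / (2 * (T:ℝ)) + 1) < d := by
        rw [div_lt_iff₀ (by linarith)]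
        nlinarith
      linarith
    nlinarith [hfinal, hpos]
  · -- lam ≥ sup → minimizer
    intro hlam' W
    rw [ge_iff_le, Finset.sup'_le_iff] at hlam'
    rw [expand W, hg0]
    have hcb : cross W ≤ lam * g W := by
      rw [hcross, hg, Finset.mul_sum]
      refine Finset.sum_le_sum fun p _ => ?_
      calc ∑ i : Fin P, W i p * C i p
          ≤ Real.sqrt (∑ i : Fin P, (W i p) ^ 2) * Real.sqrt (∑ i : Fin P, (C i p) ^ 2) :=
            Real.sum_mul_le_sqrt_mul_sqrt _ _ _
        _ ≤ Real.sqrt (∑ i : Fin P, (W i p) ^ 2) * lam := by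
            exact mul_le_mul_of_nonneg_left (hlam' p (Finset.mem_univ p)) (Real.sqrt_nonneg _)
        _ = lam * Real.sqrt (∑ i : Fin P, (W i p) ^ 2) := mul_comm _ _
    have hq : 0 ≤ (1 / (2 * (T:ℝ))) * Q W := by
      apply mul_nonneg _ (hQnn W); positivity
    linarith
end

section
/- The proximal operator of β‖·‖₂ on ℝ^P is given by prox(x; β) = (1 − β/‖x‖₂)·x if ‖x‖₂ ≥ β, and 0 otherwise. That is, for β > 0, this vector is the unique minimizer over w ∈ ℝ^P of β‖w‖₂ + (1/2)‖w − x‖₂². -/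
open RealInnerProductSpace

/-- Strong-convexity style inequality: if `x - p` is a subgradient of `β‖·‖` at `p`
(tested at `w`), then the objective at `w` exceeds that at `p` by `½‖w-p‖²`. -/
lemma prox_key_ineq {E : Type*} [NormedAddCommGroup E] [InnerProductSpace ℝ E]
    (x p w : E) (β : ℝ)
    (hsub : β * ‖p‖ + ⟪x - p, w - p⟫ ≤ β * ‖w‖) :
    β * ‖p‖ + (1/2) * ‖p - x‖^2 + (1/2) * ‖w - p‖^2 ≤ β * ‖w‖ + (1/2) * ‖w - x‖^2 := by
  have h : ‖w - x‖^2 = ‖w - p‖^2 + 2 * ⟪w - p, p - x⟫ + ‖p - x‖^2 := by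
    have h0 := norm_add_sq_real (w - p) (p - x)
    rw [show w - p + (p - x) = w - x by abel] at h0
    linarith
  have h2 : ⟪w - p, p - x⟫ = - ⟪x - p, w - p⟫ := by
    rw [real_inner_comm, ← inner_neg_left, neg_sub]
  linarith

/-- The proximal operator of `β‖·‖₂` on `ℝ^P`: for `β > 0`, the vector
`prox(x;β) = ((‖x‖₂ − β)/‖x‖₂)·x` if `‖x‖₂ ≥ β`, else `0`, is the unique
minimizer of `w ↦ β‖w‖₂ + (1/2)‖w − x‖₂²`. -/
theorem prox_euclidean_norm
    (P : ℕ) (x : Fin P → ℝ) (β : ℝ) (hβ : 0 < β)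
    (enorm : (Fin P → ℝ) → ℝ)
    (henorm : enorm = fun v => Real.sqrt (∑ i, (v i) ^ 2))
    (obj : (Fin P → ℝ) → ℝ)
    (hobj : obj = fun w => β * enorm w + (1 / 2) * ∑ i, (w i - x i) ^ 2)
    (p : Fin P → ℝ)
    (hp : p = if β ≤ enorm x then ((enorm x - β) / enorm x) • x else 0) :
    (∀ w, obj p ≤ obj w) ∧ (∀ w, obj w = obj p → w = p) := by
  classical
  set E := EuclideanSpace ℝ (Fin P) with hE
  let toE : (Fin P → ℝ) → E := fun v => WithLp.toLp 2 v
  have hnorm : ∀ v : Fin P → ℝ, enorm v = ‖toE v‖ := by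
    intro v
    rw [henorm, EuclideanSpace.norm_eq]
    simp [toE, Real.norm_eq_abs, sq_abs]
  have hsum : ∀ v w : Fin P → ℝ, ∑ i, (v i - w i)^2 = ‖toE v - toE w‖^2 := by
    intro v w
    have h1 : toE v - toE w = toE (fun i => v i - w i) := rfl
    rw [h1, EuclideanSpace.norm_eq, Real.sq_sqrt (by positivity)]
    simp only [Real.norm_eq_abs, sq_abs]
    rfl
  have hobj' : ∀ w, obj w = β * ‖toE w‖ + (1/2) * ‖toE w - toE x‖^2 := by
    intro w; rw [hobj]; simp only []
    rw [hnorm, hsum]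
  -- subgradient inequality
  have hsub : ∀ w : Fin P → ℝ,
      β * ‖toE p‖ + ⟪toE x - toE p, toE w - toE p⟫ ≤ β * ‖toE w‖ := by
    intro w
    by_cases hc : β ≤ enorm x
    · rw [if_pos hc] at hp
      have hnx : β ≤ ‖toE x‖ := by rw [← hnorm]; exact hc
      have hnx0 : 0 < ‖toE x‖ := lt_of_lt_of_le hβ hnx
      set nx := ‖toE x‖ with hnxdef
      have hne : nx ≠ 0 := ne_of_gt hnx0
      have hpE : toE p = ((nx - β)/nx) • toE x := by
        rw [hp, hnorm x]
        rfl
      have hnp : ‖toE p‖ = nx - β := by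
        rw [hpE, norm_smul, Real.norm_eq_abs,
          abs_of_nonneg (div_nonneg (by linarith) hnx0.le)]
        field_simp
        rw [← hnxdef]; ring
      have hXp : toE x - toE p = (β/nx) • toE x := by
        rw [hpE]
        have h1 : toE x - ((nx - β)/nx) • toE x = (1 - (nx - β)/nx) • toE x := by
          rw [sub_smul, one_smul]
        rw [h1]
        congr 1
        field_simp
        ring
      rw [hnp, hXp, real_inner_smul_left, inner_sub_right, hpE,
        real_inner_smul_right, real_inner_self_eq_norm_sq]
      have hCS : ⟪toE x, toE w⟫ ≤ nx * ‖toE w‖ := real_inner_le_norm _ _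
      have key2 : (nx - β)/nx * nx^2 = (nx - β) * nx := by field_simp
      rw [key2]
      have h3 : β/nx * (⟪toE x, toE w⟫ - (nx - β) * nx) ≤ β * ‖toE w‖ - β * (nx - β) := by
        rw [div_mul_eq_mul_div, div_le_iff₀ hnx0]
        nlinarith [mul_le_mul_of_nonneg_left hCS hβ.le]
      linarith
    · rw [if_neg hc] at hp
      have hnx : ‖toE x‖ < β := by rw [← hnorm]; linarith [not_le.mp hc]
      have hpE : toE p = 0 := by rw [hp]; rfl
      rw [hpE]
      simp only [norm_zero, mul_zero, sub_zero, zero_add]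
      have hCS : ⟪toE x, toE w⟫ ≤ ‖toE x‖ * ‖toE w‖ := real_inner_le_norm _ _
      nlinarith [norm_nonneg (toE w)]
  -- main
  have key : ∀ w, obj p + (1/2) * ‖toE w - toE p‖^2 ≤ obj w := by
    intro w
    rw [hobj' p, hobj' w]
    have := prox_key_ineq (toE x) (toE p) (toE w) β (hsub w)
    linarith
  constructor
  · intro w
    have := key w
    nlinarith [sq_nonneg ‖toE w - toE p‖]
  · intro w hw
    have hk := key w
    rw [hw] at hk
    have h1 : ‖toE w - toE p‖ = 0 := by
      nlinarith [norm_nonneg (toE w - toE p)]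
    have h2 : toE w = toE p := sub_eq_zero.mp (norm_eq_zero.mp h1)
    exact congrArg WithLp.ofLp h2
end
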